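/- On ℂ² with coordinates (t₂,t₃), let b₂ ∈ ℂ{t₂,t₃} (a convergent power series). Define the ideal I = (y₁ − 1, (y₂)², y₂(y₃ − b₂), (y₃ − b₂)²) in the polynomial ring ℂ{t₂,t₃}[y₁,y₂,y₃]. Then {I, I} ⊆ I for the Poisson bracket with {yᵢ, tⱼ} = −δᵢⱼ, i.e., the corresponding manifold with multiplication is an F-manifold. -/

import Mathlib

noncomputable section

abbrev Rts : Type := MvPowerSeries (Fin 2) ℂ

/-- partial derivative ∂/∂tⱼ on power series in (t₂,t₃) -/
def pderivPS (j : Fin 2) (f : Rts) : Rts :=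
  fun m => ((m j : ℂ) + 1) * f (m + Finsupp.single j 1)

abbrev Sy : Type := MvPolynomial (Fin 3) Rts

/-- apply ∂/∂tⱼ to the coefficients of a polynomial in (y₁,y₂,y₃) -/
def Dt (j : Fin 2) (f : Sy) : Sy :=
  f.support.sum (fun m => MvPolynomial.monomial m (pderivPS j (MvPolynomial.coeff m f)))

/-- Poisson bracket `{f,g} = Σₖ (∂f/∂tₖ ∂g/∂yₖ − ∂f/∂yₖ ∂g/∂tₖ)` (`t₁`-derivatives vanish);
`tₖ` for `k ∈ {2,3}` corresponds to the `y`-variable of index `k`. -/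
def poisson (f g : Sy) : Sy :=
  ∑ j : Fin 2,
    (Dt j f * MvPolynomial.pderiv j.succ g
      - MvPolynomial.pderiv j.succ f * Dt j g)

/-! ### Auxiliary lemmas -/

lemma pderivPS_zero (j : Fin 2) : pderivPS j 0 = 0 := by
  funext m
  show ((m j : ℂ) + 1) * MvPowerSeries.coeff (R := ℂ) (m + Finsupp.single j 1) 0
      = MvPowerSeries.coeff (R := ℂ) m 0
  simp

lemma pderivPS_add (j : Fin 2) (f g : Rts) :
    pderivPS j (f + g) = pderivPS j f + pderivPS j g := by
  funext m
  show ((m j : ℂ) + 1) * (f + g) (m + Finsupp.single j 1) = _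
  have : (f + g) (m + Finsupp.single j 1)
      = f (m + Finsupp.single j 1) + g (m + Finsupp.single j 1) := rfl
  rw [this]
  show _ = ((m j : ℂ) + 1) * f (m + Finsupp.single j 1)
      + ((m j : ℂ) + 1) * g (m + Finsupp.single j 1)
  ring

lemma pderivPS_sub (j : Fin 2) (f g : Rts) :
    pderivPS j (f - g) = pderivPS j f - pderivPS j g := by
  funext m
  show ((m j : ℂ) + 1) * (f - g) (m + Finsupp.single j 1) = _
  have : (f - g) (m + Finsupp.single j 1)
      = f (m + Finsupp.single j 1) - g (m + Finsupp.single j 1) := rfl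
  rw [this]
  show _ = ((m j : ℂ) + 1) * f (m + Finsupp.single j 1)
      - ((m j : ℂ) + 1) * g (m + Finsupp.single j 1)
  ring

/-- `pderivPS` as an additive monoid hom. -/
def pderivPSA (j : Fin 2) : Rts →+ Rts := AddMonoidHom.mk' (pderivPS j) (pderivPS_add j)

lemma pderivPS_one (j : Fin 2) : pderivPS j 1 = 0 := by
  funext m
  show ((m j : ℂ) + 1) * (MvPowerSeries.coeff (R := ℂ) (m + Finsupp.single j 1) 1) = 0
  rw [MvPowerSeries.coeff_one, if_neg, mul_zero]
  intro h
  have := DFunLike.congr_fun h j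
  simp at this

/-- Product rule for `pderivPS`. -/
lemma pderivPS_mul (j : Fin 2) (f g : Rts) :
    pderivPS j (f * g) = pderivPS j f * g + f * pderivPS j g := by
  classical
  funext m
  set e : Fin 2 →₀ ℕ := Finsupp.single j 1 with he
  have lhs : pderivPS j (f * g) m
      = ∑ pq ∈ Finset.HasAntidiagonal.antidiagonal (m + e), ((m j : ℂ) + 1) * (f pq.1 * g pq.2) := by
    show ((m j : ℂ) + 1) * MvPowerSeries.coeff (R := ℂ) (m + e) (f * g) = _
    rw [MvPowerSeries.coeff_mul, Finset.mul_sum]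
    rfl
  have rhs : (pderivPS j f * g + f * pderivPS j g) m
      = (∑ pq ∈ Finset.HasAntidiagonal.antidiagonal m, ((pq.1 j : ℂ) + 1) * f (pq.1 + e) * g pq.2)
        + ∑ pq ∈ Finset.HasAntidiagonal.antidiagonal m, f pq.1 * (((pq.2 j : ℂ) + 1) * g (pq.2 + e)) := by
    show MvPowerSeries.coeff (R := ℂ) m (pderivPS j f * g) + MvPowerSeries.coeff (R := ℂ) m (f * pderivPS j g) = _
    rw [MvPowerSeries.coeff_mul, MvPowerSeries.coeff_mul]
    refine congrArg₂ (· + ·) ?_ ?_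
    · apply Finset.sum_congr rfl; intro pq _
      show pderivPS j f pq.1 * g pq.2 = _
      simp only [pderivPS]; try ring
    · apply Finset.sum_congr rfl; intro pq _; rfl
  rw [lhs, rhs]
  -- split (m j + 1) = pq.1 j + pq.2 j
  have split : ∑ pq ∈ Finset.HasAntidiagonal.antidiagonal (m + e), ((m j : ℂ) + 1) * (f pq.1 * g pq.2)
      = (∑ pq ∈ Finset.HasAntidiagonal.antidiagonal (m + e), (pq.1 j : ℂ) * (f pq.1 * g pq.2))
        + ∑ pq ∈ Finset.HasAntidiagonal.antidiagonal (m + e), (pq.2 j : ℂ) * (f pq.1 * g pq.2) := by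
    rw [← Finset.sum_add_distrib]
    apply Finset.sum_congr rfl
    intro pq hpq
    rw [Finset.HasAntidiagonal.mem_antidiagonal] at hpq
    have : pq.1 j + pq.2 j = m j + 1 := by
      have := DFunLike.congr_fun hpq j
      simpa [he] using this
    have hc : ((pq.1 j : ℂ) + (pq.2 j : ℂ)) = (m j : ℂ) + 1 := by
      exact_mod_cast congrArg (Nat.cast : ℕ → ℂ) this
    rw [← hc]; ring
  rw [split]
  congr 1
  · -- first sums
    rw [← Finset.sum_filter_of_ne (p := fun pq => pq.1 j ≠ 0)
      (by intro pq _ h; by_contra hne; apply h; rw [hne]; simp)]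
    apply Finset.sum_nbij' (i := fun pq => (pq.1 - e, pq.2)) (j := fun pq => (pq.1 + e, pq.2))
    · intro pq hpq
      simp only [Finset.mem_filter, Finset.HasAntidiagonal.mem_antidiagonal] at hpq
      obtain ⟨h1, h2⟩ := hpq
      have hle : e ≤ pq.1 := by
        rw [he, Finsupp.single_le_iff]; omega
      rw [Finset.HasAntidiagonal.mem_antidiagonal]
      have : pq.1 - e + e = pq.1 := tsub_add_cancel_of_le hle
      have h3 : pq.1 - e + pq.2 + e = m + e := by
        rw [add_right_comm, this, h1]
      exact add_right_cancel h3
    · intro pq hpq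
      rw [Finset.HasAntidiagonal.mem_antidiagonal] at hpq
      simp only [Finset.mem_filter, Finset.HasAntidiagonal.mem_antidiagonal]
      constructor
      · rw [add_right_comm, hpq]
      · simp [he]
    · intro pq hpq
      simp only [Finset.mem_filter] at hpq
      have hle : e ≤ pq.1 := by
        rw [he, Finsupp.single_le_iff]; omega
      simp [tsub_add_cancel_of_le hle]
    · intro pq hpq
      simp
    · intro pq hpq
      simp only [Finset.mem_filter, Finset.HasAntidiagonal.mem_antidiagonal] at hpq
      obtain ⟨h1, h2⟩ := hpq
      have hle : e ≤ pq.1 := by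
        rw [he, Finsupp.single_le_iff]; omega
      have hsub : ((pq.1 - e) j : ℂ) + 1 = (pq.1 j : ℂ) := by
        have : (pq.1 - e) j = pq.1 j - 1 := by
          rw [Finsupp.tsub_apply, he, Finsupp.single_eq_same]
        rw [this]
        have : 1 ≤ pq.1 j := by omega
        push_cast [this]
        ring
      rw [tsub_add_cancel_of_le hle, hsub]
      ring
  · -- second sums
    rw [← Finset.sum_filter_of_ne (p := fun pq => pq.2 j ≠ 0)
      (by intro pq _ h; by_contra hne; apply h; rw [hne]; simp)]
    apply Finset.sum_nbij' (i := fun pq => (pq.1, pq.2 - e)) (j := fun pq => (pq.1, pq.2 + e))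
    · intro pq hpq
      simp only [Finset.mem_filter, Finset.HasAntidiagonal.mem_antidiagonal] at hpq
      obtain ⟨h1, h2⟩ := hpq
      have hle : e ≤ pq.2 := by
        rw [he, Finsupp.single_le_iff]; omega
      rw [Finset.HasAntidiagonal.mem_antidiagonal]
      have : pq.2 - e + e = pq.2 := tsub_add_cancel_of_le hle
      have h3 : pq.1 + (pq.2 - e) + e = m + e := by
        rw [add_assoc, this, h1]
      exact add_right_cancel h3
    · intro pq hpq
      rw [Finset.HasAntidiagonal.mem_antidiagonal] at hpq
      simp only [Finset.mem_filter, Finset.HasAntidiagonal.mem_antidiagonal]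
      constructor
      · rw [← add_assoc, hpq]
      · simp [he]
    · intro pq hpq
      simp only [Finset.mem_filter] at hpq
      have hle : e ≤ pq.2 := by
        rw [he, Finsupp.single_le_iff]; omega
      simp [tsub_add_cancel_of_le hle]
    · intro pq hpq
      simp
    · intro pq hpq
      simp only [Finset.mem_filter, Finset.HasAntidiagonal.mem_antidiagonal] at hpq
      obtain ⟨h1, h2⟩ := hpq
      have hle : e ≤ pq.2 := by
        rw [he, Finsupp.single_le_iff]; omega
      have hsub : ((pq.2 - e) j : ℂ) + 1 = (pq.2 j : ℂ) := by
        have : (pq.2 - e) j = pq.2 j - 1 := by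
          rw [Finsupp.tsub_apply, he, Finsupp.single_eq_same]
        rw [this]
        have : 1 ≤ pq.2 j := by omega
        push_cast [this]
        ring
      rw [tsub_add_cancel_of_le hle, hsub]
      ring

lemma coeff_Dt (j : Fin 2) (f : Sy) (n : Fin 3 →₀ ℕ) :
    (Dt j f).coeff n = pderivPS j (f.coeff n) := by
  classical
  unfold Dt
  rw [MvPolynomial.coeff_sum]
  simp only [MvPolynomial.coeff_monomial]
  rw [Finset.sum_ite_eq' f.support n (fun m => pderivPS j (f.coeff m))]
  split_ifs with h
  · rfl
  · rw [MvPolynomial.notMem_support_iff.mp h, pderivPS_zero]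

lemma Dt_add (j : Fin 2) (f g : Sy) : Dt j (f + g) = Dt j f + Dt j g := by
  ext n; simp [coeff_Dt, pderivPS_add]

lemma Dt_sub (j : Fin 2) (f g : Sy) : Dt j (f - g) = Dt j f - Dt j g := by
  ext n; simp [coeff_Dt, pderivPS_sub]

lemma Dt_mul (j : Fin 2) (f g : Sy) : Dt j (f * g) = Dt j f * g + f * Dt j g := by
  classical
  apply MvPolynomial.ext
  intro n
  rw [coeff_Dt, MvPolynomial.coeff_mul]
  rw [show (pderivPS j (∑ pq ∈ Finset.HasAntidiagonal.antidiagonal n, f.coeff pq.1 * g.coeff pq.2))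
      = pderivPSA j (∑ pq ∈ Finset.HasAntidiagonal.antidiagonal n, f.coeff pq.1 * g.coeff pq.2) from rfl]
  rw [map_sum]
  rw [MvPolynomial.coeff_add, MvPolynomial.coeff_mul, MvPolynomial.coeff_mul,
    ← Finset.sum_add_distrib]
  apply Finset.sum_congr rfl
  intro pq _
  show pderivPS j (f.coeff pq.1 * g.coeff pq.2) = _
  rw [pderivPS_mul, coeff_Dt, coeff_Dt]

lemma Dt_zero (j : Fin 2) : Dt j (0 : Sy) = 0 := by
  apply MvPolynomial.ext
  intro n
  rw [coeff_Dt, MvPolynomial.coeff_zero, pderivPS_zero]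

lemma Dt_C (j : Fin 2) (a : Rts) : Dt j (MvPolynomial.C a) = MvPolynomial.C (pderivPS j a) := by
  apply MvPolynomial.ext
  intro n
  rw [coeff_Dt, MvPolynomial.coeff_C, MvPolynomial.coeff_C]
  split_ifs
  · rfl
  · rw [pderivPS_zero]

lemma Dt_X (j : Fin 2) (i : Fin 3) : Dt j (MvPolynomial.X i) = 0 := by
  classical
  apply MvPolynomial.ext
  intro n
  rw [coeff_Dt, MvPolynomial.coeff_X', MvPolynomial.coeff_zero]
  split_ifs
  · rw [pderivPS_one]
  · rw [pderivPS_zero]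

lemma Dt_one (j : Fin 2) : Dt j (1 : Sy) = 0 := by
  rw [show (1 : Sy) = MvPolynomial.C 1 from rfl, Dt_C, pderivPS_one, map_zero]

/-! ### Poisson bracket lemmas -/

lemma poisson_add_left (f₁ f₂ g : Sy) :
    poisson (f₁ + f₂) g = poisson f₁ g + poisson f₂ g := by
  unfold poisson
  rw [← Finset.sum_add_distrib]
  apply Finset.sum_congr rfl
  intro j _
  rw [Dt_add, map_add]
  ring

lemma poisson_add_right (f g₁ g₂ : Sy) :
    poisson f (g₁ + g₂) = poisson f g₁ + poisson f g₂ := by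
  unfold poisson
  rw [← Finset.sum_add_distrib]
  apply Finset.sum_congr rfl
  intro j _
  rw [Dt_add, map_add]
  ring

lemma poisson_zero_left (g : Sy) : poisson 0 g = 0 := by
  unfold poisson
  apply Finset.sum_eq_zero
  intro j _
  rw [Dt_zero, map_zero]
  ring

lemma poisson_zero_right (f : Sy) : poisson f 0 = 0 := by
  unfold poisson
  apply Finset.sum_eq_zero
  intro j _
  rw [Dt_zero, map_zero]
  ring

lemma poisson_mul_left (a f g : Sy) :
    poisson (a * f) g = a * poisson f g + f * poisson a g := by
  unfold poisson
  rw [Finset.mul_sum, Finset.mul_sum, ← Finset.sum_add_distrib]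
  apply Finset.sum_congr rfl
  intro j _
  rw [Dt_mul, MvPolynomial.pderiv_mul]
  ring

lemma poisson_mul_right (a f g : Sy) :
    poisson f (a * g) = a * poisson f g + g * poisson f a := by
  unfold poisson
  rw [Finset.mul_sum, Finset.mul_sum, ← Finset.sum_add_distrib]
  apply Finset.sum_congr rfl
  intro j _
  rw [Dt_mul, MvPolynomial.pderiv_mul]
  ring

lemma poisson_swap (f g : Sy) : poisson g f = -poisson f g := by
  unfold poisson
  rw [← Finset.sum_neg_distrib]
  apply Finset.sum_congr rfl
  intro j _
  ring

open MvPolynomial in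
/-- For any (convergent) power series `b₂` in `(t₂,t₃)`, the ideal
`I = (y₁ − 1, y₂², y₂(y₃ − b₂), (y₃ − b₂)²)` is closed under the Poisson bracket
`{yᵢ,tⱼ} = −δᵢⱼ`; i.e. the corresponding manifold with multiplication
(`∂₂² = ∂₂(∂₃ − b₂∂₁) = (∂₃ − b₂∂₁)² = 0`) is an `F`-manifold. -/
theorem poisson_closed_Qone_family (b₂ : Rts) :
    ∀ f ∈ Ideal.span {(X 0 : Sy) - 1, (X 1 : Sy) ^ 2,
        (X 1 : Sy) * (X 2 - C b₂), ((X 2 : Sy) - C b₂) ^ 2},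
      ∀ g ∈ Ideal.span {(X 0 : Sy) - 1, (X 1 : Sy) ^ 2,
        (X 1 : Sy) * (X 2 - C b₂), ((X 2 : Sy) - C b₂) ^ 2},
        poisson f g ∈ Ideal.span {(X 0 : Sy) - 1, (X 1 : Sy) ^ 2,
          (X 1 : Sy) * (X 2 - C b₂), ((X 2 : Sy) - C b₂) ^ 2} := by
  classical
  have hsucc0 : (0 : Fin 2).succ = (1 : Fin 3) := rfl
  have hsucc1 : (1 : Fin 2).succ = (2 : Fin 3) := rfl
  set S : Set Sy := {(X 0 : Sy) - 1, (X 1 : Sy) ^ 2,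
      (X 1 : Sy) * (X 2 - C b₂), ((X 2 : Sy) - C b₂) ^ 2} with hS
  set I : Ideal Sy := Ideal.span S with hI
  -- precomputed Dt on generators
  have DtX0 : ∀ j, Dt j ((X 0 : Sy) - 1) = 0 := fun j => by
    rw [Dt_sub, Dt_X, Dt_one, sub_zero]
  have Dtu : ∀ j, Dt j ((X 2 : Sy) - C b₂) = -C (pderivPS j b₂) := fun j => by
    rw [Dt_sub, Dt_X, Dt_C, zero_sub]
  have DtX1sq : ∀ j, Dt j ((X 1 : Sy) ^ 2) = 0 := fun j => by
    rw [sq, Dt_mul, Dt_X, zero_mul, mul_zero, add_zero]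
  have Dtg2 : ∀ j, Dt j ((X 1 : Sy) * (X 2 - C b₂))
      = -(C (pderivPS j b₂) * X 1) := fun j => by
    rw [Dt_mul, Dt_X, Dtu, zero_mul, zero_add]; ring
  have Dtg3 : ∀ j, Dt j (((X 2 : Sy) - C b₂) ^ 2)
      = -(2 * C (pderivPS j b₂) * (X 2 - C b₂)) := fun j => by
    rw [sq, Dt_mul, Dtu]; ring
  -- pderiv on generators
  have pd_u : ∀ i : Fin 3, pderiv i ((X 2 : Sy) - C b₂)
      = pderiv i (X 2 : Sy) := fun i => by
    rw [map_sub, pderiv_C, sub_zero]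
  -- membership helpers
  have m0 : ((X 0 : Sy) - 1) ∈ I := Ideal.subset_span (by simp [hS])
  have m1 : ((X 1 : Sy) ^ 2) ∈ I := Ideal.subset_span (by simp [hS])
  have m2 : ((X 1 : Sy) * (X 2 - C b₂)) ∈ I := Ideal.subset_span (by simp [hS])
  have m3 : (((X 2 : Sy) - C b₂) ^ 2) ∈ I := Ideal.subset_span (by simp [hS])
  -- brackets of generators
  have key : ∀ f ∈ S, ∀ g ∈ S, poisson f g ∈ I := by
    have bX0 : ∀ g, poisson ((X 0 : Sy) - 1) g = 0 := by
      intro g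
      unfold poisson
      rw [Fin.sum_univ_two, hsucc0, hsucc1]
      rw [DtX0, DtX0]
      have p1 : pderiv (1 : Fin 3) ((X 0 : Sy) - 1) = 0 := by
        rw [map_sub, pderiv_one, sub_zero, pderiv_X_of_ne]; decide
      have p2 : pderiv (2 : Fin 3) ((X 0 : Sy) - 1) = 0 := by
        rw [map_sub, pderiv_one, sub_zero, pderiv_X_of_ne]; decide
      rw [p1, p2]
      ring
    have bswap : ∀ f g, poisson f g ∈ I → poisson g f ∈ I := by
      intro f g h
      rw [poisson_swap]
      exact I.neg_mem h
    have b11 : poisson ((X 1 : Sy) ^ 2) ((X 1 : Sy) ^ 2) ∈ I := by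
      have : poisson ((X 1 : Sy) ^ 2) ((X 1 : Sy) ^ 2) = 0 := by
        unfold poisson; apply Finset.sum_eq_zero; intro j _; ring
      rw [this]; exact I.zero_mem
    have b12 : poisson ((X 1 : Sy) ^ 2) ((X 1 : Sy) * (X 2 - C b₂)) ∈ I := by
      have : poisson ((X 1 : Sy) ^ 2) ((X 1 : Sy) * (X 2 - C b₂))
          = (2 * C (pderivPS 0 b₂)) * ((X 1 : Sy) ^ 2) := by
        unfold poisson
        rw [Fin.sum_univ_two, hsucc0, hsucc1, DtX1sq, DtX1sq, Dtg2, Dtg2]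
        have p1 : pderiv (1 : Fin 3) ((X 1 : Sy) ^ 2) = 2 * X 1 := by
          rw [pderiv_pow, pderiv_X_self]; norm_num
        have p2 : pderiv (2 : Fin 3) ((X 1 : Sy) ^ 2) = 0 := by
          rw [pderiv_pow, pderiv_X_of_ne (by decide)]; ring
        rw [p1, p2]
        ring
      rw [this]
      exact Ideal.mul_mem_left _ _ m1
    have b13 : poisson ((X 1 : Sy) ^ 2) (((X 2 : Sy) - C b₂) ^ 2) ∈ I := by
      have : poisson ((X 1 : Sy) ^ 2) (((X 2 : Sy) - C b₂) ^ 2)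
          = (4 * C (pderivPS 0 b₂)) * ((X 1 : Sy) * (X 2 - C b₂)) := by
        unfold poisson
        rw [Fin.sum_univ_two, hsucc0, hsucc1, DtX1sq, DtX1sq, Dtg3, Dtg3]
        have p1 : pderiv (1 : Fin 3) ((X 1 : Sy) ^ 2) = 2 * X 1 := by
          rw [pderiv_pow, pderiv_X_self]; norm_num
        have p2 : pderiv (2 : Fin 3) ((X 1 : Sy) ^ 2) = 0 := by
          rw [pderiv_pow, pderiv_X_of_ne (by decide)]; ring
        rw [p1, p2]
        ring
      rw [this]
      exact Ideal.mul_mem_left _ _ m2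
    have b22 : poisson ((X 1 : Sy) * (X 2 - C b₂)) ((X 1 : Sy) * (X 2 - C b₂)) ∈ I := by
      have : poisson ((X 1 : Sy) * (X 2 - C b₂)) ((X 1 : Sy) * (X 2 - C b₂)) = 0 := by
        unfold poisson; apply Finset.sum_eq_zero; intro j _; ring
      rw [this]; exact I.zero_mem
    have b23 : poisson ((X 1 : Sy) * (X 2 - C b₂)) (((X 2 : Sy) - C b₂) ^ 2) ∈ I := by
      have : poisson ((X 1 : Sy) * (X 2 - C b₂)) (((X 2 : Sy) - C b₂) ^ 2)
          = (2 * C (pderivPS 0 b₂)) * (((X 2 : Sy) - C b₂) ^ 2) := by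
        unfold poisson
        rw [Fin.sum_univ_two, hsucc0, hsucc1, Dtg2, Dtg2, Dtg3, Dtg3]
        have pg2_1 : pderiv (1 : Fin 3) ((X 1 : Sy) * (X 2 - C b₂))
            = X 2 - C b₂ := by
          rw [pderiv_mul, pd_u, pderiv_X_self, pderiv_X_of_ne (by decide)]; ring
        have pg2_2 : pderiv (2 : Fin 3) ((X 1 : Sy) * (X 2 - C b₂))
            = X 1 := by
          rw [pderiv_mul, pd_u, pderiv_X_self, pderiv_X_of_ne (by decide)]; ring
        have pg3_1 : pderiv (1 : Fin 3) (((X 2 : Sy) - C b₂) ^ 2) = 0 := by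
          rw [pderiv_pow, pd_u, pderiv_X_of_ne (by decide)]; ring
        have pg3_2 : pderiv (2 : Fin 3) (((X 2 : Sy) - C b₂) ^ 2)
            = 2 * (X 2 - C b₂) := by
          rw [pderiv_pow, pd_u, pderiv_X_self]; norm_num
        rw [pg2_1, pg2_2, pg3_1, pg3_2]
        ring
      rw [this]
      exact Ideal.mul_mem_left _ _ m3
    have b33 : poisson (((X 2 : Sy) - C b₂) ^ 2) (((X 2 : Sy) - C b₂) ^ 2) ∈ I := by
      have : poisson (((X 2 : Sy) - C b₂) ^ 2) (((X 2 : Sy) - C b₂) ^ 2) = 0 := by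
        unfold poisson; apply Finset.sum_eq_zero; intro j _; ring
      rw [this]; exact I.zero_mem
    intro f hf g hg
    rcases hf with rfl | rfl | rfl | rfl <;> rcases hg with rfl | rfl | rfl | rfl
    · rw [bX0]; exact I.zero_mem
    · rw [bX0]; exact I.zero_mem
    · rw [bX0]; exact I.zero_mem
    · rw [bX0]; exact I.zero_mem
    · exact bswap _ _ (by rw [bX0]; exact I.zero_mem)
    · exact b11
    · exact b12
    · exact b13
    · exact bswap _ _ (by rw [bX0]; exact I.zero_mem)
    · exact bswap _ _ b12
    · exact b22
    · exact b23
    · exact bswap _ _ (by rw [bX0]; exact I.zero_mem)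
    · exact bswap _ _ b13
    · exact bswap _ _ b23
    · exact b33
  -- step: for fixed f ∈ S, all g ∈ I
  have step : ∀ f ∈ S, ∀ g ∈ I, poisson f g ∈ I := by
    intro f hf g hg
    induction hg using Submodule.span_induction with
    | mem x hx => exact key f hf x hx
    | zero => rw [poisson_zero_right]; exact I.zero_mem
    | add x y hx hy ihx ihy => rw [poisson_add_right]; exact I.add_mem ihx ihy
    | smul a x hx ih =>
        rw [smul_eq_mul, poisson_mul_right]
        exact I.add_mem (Ideal.mul_mem_left _ _ ih) (Ideal.mul_mem_right _ _ hx)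
  intro f hf g hg
  induction hf using Submodule.span_induction with
  | mem x hx => exact step x hx g hg
  | zero => rw [poisson_zero_left]; exact I.zero_mem
  | add x y hx hy ihx ihy => rw [poisson_add_left]; exact I.add_mem ihx ihy
  | smul a x hx ih =>
      rw [smul_eq_mul, poisson_mul_left]
      exact I.add_mem (Ideal.mul_mem_left _ _ ih) (Ideal.mul_mem_right _ _ hx)

end
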